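/- If P is odd and Q ≡ 3 (mod 4), then U_15(P,Q) ≡ 2 (mod 4), hence U_15(P,Q) is not a perfect square. -/
import Mathlib


def lucasU (P Q : ℤ) : ℕ → ℤ
  | 0 => 0
  | 1 => 1
  | (n + 2) => P * lucasU P Q (n + 1) - Q * lucasU P Q n

lemma lucasU_cast4 (P Q : ℤ) (hP : Odd P) (hQ4 : Q % 4 = 3) :
    ((lucasU P Q 15 : ℤ) : ZMod 4) = 2 := by
  have hq : ((Q : ZMod 4)) = 3 := by
    have : (Q : ZMod 4) = ((3 : ℤ) : ZMod 4) := by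
      rw [ZMod.intCast_eq_intCast_iff]
      show Q % 4 = 3 % 4
      omega
    simpa using this
  obtain ⟨k, hk⟩ := hP
  have hp : (P : ZMod 4) = 2 * (k : ZMod 4) + 1 := by
    rw [hk]; push_cast; ring
  have hp2 : (P : ZMod 4) = 1 ∨ (P : ZMod 4) = 3 := by
    rw [hp]
    have : ∀ x : ZMod 4, 2 * x + 1 = 1 ∨ 2 * x + 1 = 3 := by decide
    exact this _
  show ((lucasU P Q 15 : ℤ) : ZMod 4) = 2
  simp only [lucasU]
  push_cast
  rw [hq]
  rcases hp2 with h | h <;> rw [h] <;> ring_nf <;> decide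

theorem stmt17 (P Q : ℤ) (hP : Odd P) (hQ4 : Q % 4 = 3) :
    lucasU P Q 15 ≡ 2 [ZMOD 4] ∧ ¬ ∃ k : ℤ, lucasU P Q 15 = k ^ 2 := by
  have h := lucasU_cast4 P Q hP hQ4
  constructor
  · exact (ZMod.intCast_eq_intCast_iff _ _ _).mp (by simpa using h)
  · rintro ⟨k, hk⟩
    have h2 : ((k : ZMod 4)) ^ 2 = 2 := by
      have := congrArg (fun x : ℤ => (x : ZMod 4)) hk
      push_cast at this
      rw [h] at this
      exact this.symm
    have : ∀ x : ZMod 4, x ^ 2 ≠ 2 := by decide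
    exact this _ h2
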